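/- Among all lists of the same length, insertion sort makes the fewest comparisons on already-sorted lists: for all lists x1 and x2, if x1 is sorted and |x1| = |x2|, then the number of comparisons (isort x1).2 is at most (isort x2).2. -/

import Mathlib

def insertC (x : ℕ) : List ℕ → List ℕ × ℕ
  | [] => ([x], 0)
  | h :: t =>
    if x ≤ h then (x :: h :: t, 1)
    else let s := insertC x t; (h :: s.1, 1 + s.2)

def isortC : List ℕ → List ℕ × ℕ
  | [] => ([], 0)
  | h :: t =>
    let s := isortC t
    let s' := insertC h s.1
    (s'.1, s.2 + s'.2)

noncomputable def lmin : List ℕ → ℕ∞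
  | [] => ⊤
  | h :: t => min (h : ℕ∞) (lmin t)

def sorted : List ℕ → Prop
  | [] => True
  | h :: t => sorted t ∧ (h : ℕ∞) ≤ lmin t

lemma insertC_len (x : ℕ) (l : List ℕ) : ((insertC x l).1).length = l.length + 1 := by
  induction l with
  | nil => simp [insertC]
  | cons h t ih =>
    simp only [insertC]
    split <;> simp [ih]

lemma isortC_len (l : List ℕ) : ((isortC l).1).length = l.length := by
  induction l with
  | nil => simp [isortC]
  | cons h t ih => simp [isortC, insertC_len, ih]

lemma isortC_cost_ge (l : List ℕ) : l.length - 1 ≤ (isortC l).2 := by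
  induction l with
  | nil => simp [isortC]
  | cons h t ih =>
    simp only [isortC]
    cases ht : t with
    | nil => simp
    | cons a t' =>
      subst ht
      have hne : (isortC (a :: t')).1 ≠ [] := by
        intro he
        have := isortC_len (a :: t')
        rw [he] at this
        simp at this
      have h1 : 1 ≤ (insertC h (isortC (a :: t')).1).2 := by
        cases hl : (isortC (a :: t')).1 with
        | nil => exact absurd hl hne
        | cons b l' =>
          simp only [insertC]
          split <;> simp
      simp only [List.length_cons] at ih ⊢
      omega

lemma isortC_sorted (l : List ℕ) (hs : sorted l) : isortC l = (l, l.length - 1) := by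
  induction l with
  | nil => simp [isortC]
  | cons h t ih =>
    obtain ⟨hst, hle⟩ := hs
    have ht := ih hst
    simp only [isortC, ht]
    cases t with
    | nil => simp [insertC]
    | cons a t' =>
      have hha : h ≤ a := by
        have : (h : ℕ∞) ≤ (a : ℕ∞) := le_trans hle (min_le_left _ _)
        exact_mod_cast this
      simp [insertC, hha]

theorem isort_sorted_min_cost (x1 x2 : List ℕ)
    (h1 : sorted x1) (h2 : x1.length = x2.length) :
    (isortC x1).2 ≤ (isortC x2).2 := by
  rw [isortC_sorted x1 h1]
  have := isortC_cost_ge x2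
  simp only
  omega
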